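/- Let H ∈ ℂ^{N×K} with HᴴH invertible and let ν ≥ 0. For each N₀ > 0 set M(N₀) := Hᴴ(N₀I + HHᴴ)⁻¹H − I, and suppose G(N₀) is a Hermitian K×K matrix banded within diagonals [−ν, ν] with I + G(N₀) positive definite satisfying [(I+G(N₀))⁻¹]_ν = −[M(N₀)]_ν. Then: (i) lim_{N₀→0⁺} [(N₀(I+G(N₀)))⁻¹]_ν = [(HᴴH)⁻¹]_ν; (ii) lim_{N₀→∞} [N₀ G(N₀)]_ν = [HᴴH]_ν (limits entrywise). -/

import Mathlib

open Matrix Filter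
open scoped ComplexOrder Topology

/-- `[A]_ν`: the matrix agreeing with `A` on the diagonals `|k − ℓ| ≤ ν` and zero elsewhere. -/
def bandPart {K : ℕ} (ν : ℕ) (A : Matrix (Fin K) (Fin K) ℂ) : Matrix (Fin K) (Fin K) ℂ :=
  Matrix.of fun k ℓ => if |((k : ℕ) : ℤ) - ((ℓ : ℕ) : ℤ)| ≤ (ν : ℤ) then A k ℓ else 0

namespace Complex

noncomputable def abs : AbsoluteValue ℂ ℝ := IsAbsoluteValue.toAbsoluteValue (norm : ℂ → ℝ)

lemma abs_coe' (z : ℂ) : Complex.abs z = ‖z‖ := rfl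

lemma abs_ofReal (x : ℝ) : Complex.abs (x : ℂ) = |x| := by
  rw [abs_coe', Complex.norm_real, Real.norm_eq_abs]

lemma abs_conj (z : ℂ) : Complex.abs ((starRingEnd ℂ) z) = Complex.abs z := by
  rw [abs_coe', abs_coe', Complex.norm_conj]

lemma norm_eq_abs (z : ℂ) : ‖z‖ = Complex.abs z := rfl

lemma continuous_abs : Continuous Complex.abs := continuous_norm

end Complex

namespace BandAux

variable {K : ℕ} {ν : ℕ}

lemma bandPart_apply (A : Matrix (Fin K) (Fin K) ℂ) (k l : Fin K) :
    bandPart ν A k l = if |((k : ℕ) : ℤ) - ((l : ℕ) : ℤ)| ≤ (ν : ℤ) then A k l else 0 := rfl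

lemma bandPart_add (A B : Matrix (Fin K) (Fin K) ℂ) :
    bandPart ν (A + B) = bandPart ν A + bandPart ν B := by
  ext k l; simp only [bandPart_apply, Matrix.add_apply]; split <;> simp

lemma bandPart_sub (A B : Matrix (Fin K) (Fin K) ℂ) :
    bandPart ν (A - B) = bandPart ν A - bandPart ν B := by
  ext k l; simp only [bandPart_apply, Matrix.sub_apply]; split <;> simp

lemma bandPart_one : bandPart ν (1 : Matrix (Fin K) (Fin K) ℂ) = 1 := by
  ext k l
  simp only [bandPart_apply, Matrix.one_apply]
  by_cases h : k = l
  · subst h; simp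
  · split <;> simp [h]

lemma bandPart_eq_self {A : Matrix (Fin K) (Fin K) ℂ}
    (h : ∀ k l : Fin K, |((k : ℕ) : ℤ) - ((l : ℕ) : ℤ)| > (ν : ℤ) → A k l = 0) :
    bandPart ν A = A := by
  ext k l; simp only [bandPart_apply]
  by_cases hc : |((k : ℕ) : ℤ) - ((l : ℕ) : ℤ)| ≤ (ν : ℤ)
  · rw [if_pos hc]
  · rw [if_neg hc, (h k l (lt_of_not_ge hc))]

lemma abs_bandPart_le (A : Matrix (Fin K) (Fin K) ℂ) (k l : Fin K) :
    Complex.abs (bandPart ν A k l) ≤ Complex.abs (A k l) := by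
  simp only [bandPart_apply]; split <;> simp

lemma trace_mul_bandPart {A : Matrix (Fin K) (Fin K) ℂ}
    (h : ∀ k l : Fin K, |((k : ℕ) : ℤ) - ((l : ℕ) : ℤ)| > (ν : ℤ) → A k l = 0)
    (X : Matrix (Fin K) (Fin K) ℂ) :
    Matrix.trace (A * bandPart ν X) = Matrix.trace (A * X) := by
  simp only [Matrix.trace, Matrix.diag, Matrix.mul_apply]
  refine Finset.sum_congr rfl fun k _ => Finset.sum_congr rfl fun l _ => ?_
  by_cases hb : |((k : ℕ) : ℤ) - ((l : ℕ) : ℤ)| ≤ (ν : ℤ)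
  · have : |((l : ℕ) : ℤ) - ((k : ℕ) : ℤ)| ≤ (ν : ℤ) := by rw [abs_sub_comm]; exact hb
    rw [bandPart_apply, if_pos this]
  · rw [h k l (lt_of_not_ge hb), zero_mul, zero_mul]

lemma core {G E : Matrix (Fin K) (Fin K) ℂ}
    (hGH : G.IsHermitian)
    (hband : ∀ k l : Fin K, |((k : ℕ) : ℤ) - ((l : ℕ) : ℤ)| > (ν : ℤ) → G k l = 0)
    (hpd : (1 + G).PosDef)
    (hbe : bandPart ν (1 + G)⁻¹ = 1 - bandPart ν E)
    {ε : ℝ} (hε0 : 0 ≤ ε) (hε2 : ε ≤ 1/2)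
    (hEsum : ∑ k : Fin K, ∑ l : Fin K, Complex.abs (E k l) ^ 2 ≤ ε ^ 2) :
    ∀ k l : Fin K, Complex.abs ((G - bandPart ν E) k l) ≤ 2 * ε ^ 2 := by
  classical
  have hH : (1 + G).IsHermitian := hpd.isHermitian
  set t : Fin K → ℝ := hH.eigenvalues with ht_def
  set U : Matrix (Fin K) (Fin K) ℂ := (hH.eigenvectorUnitary : Matrix (Fin K) (Fin K) ℂ) with hU_def
  have ht : ∀ i, 0 < t i := fun i => hpd.eigenvalues_pos i
  have hU2 : star U * U = 1 := (Matrix.mem_unitaryGroup_iff').mp (hH.eigenvectorUnitary).2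
  have hU1 : U * star U = 1 := (Matrix.mem_unitaryGroup_iff).mp (hH.eigenvectorUnitary).2
  -- abbreviation for conjugated diagonal matrices
  set Ψ : (Fin K → ℝ) → Matrix (Fin K) (Fin K) ℂ :=
    fun d => U * Matrix.diagonal (RCLike.ofReal ∘ d) * star U with hΨ_def
  have Ψcongr : ∀ {d1 d2 : Fin K → ℝ}, (∀ i, d1 i = d2 i) → Ψ d1 = Ψ d2 := by
    intro d1 d2 h
    have : d1 = d2 := funext h
    rw [this]
  have mulΨ : ∀ d1 d2 : Fin K → ℝ, Ψ d1 * Ψ d2 = Ψ (fun i => d1 i * d2 i) := by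
    intro d1 d2
    simp only [hΨ_def]
    calc U * Matrix.diagonal (RCLike.ofReal ∘ d1) * star U *
          (U * Matrix.diagonal (RCLike.ofReal ∘ d2) * star U)
        = U * (Matrix.diagonal (RCLike.ofReal ∘ d1) * ((star U * U) *
            Matrix.diagonal (RCLike.ofReal ∘ d2))) * star U := by
          simp only [Matrix.mul_assoc]
      _ = U * Matrix.diagonal (RCLike.ofReal ∘ fun i => d1 i * d2 i) * star U := by
          rw [hU2, Matrix.one_mul, Matrix.diagonal_mul_diagonal]
          simp only [Matrix.mul_assoc]
          have : (fun i => (RCLike.ofReal ∘ d1) i * (RCLike.ofReal ∘ d2) i)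
              = (RCLike.ofReal (K := ℂ) ∘ fun i => d1 i * d2 i) := by
            funext i; simp
          rw [this]
  have spec : 1 + G = Ψ t := hH.spectral_theorem
  have hone : (1 : Matrix (Fin K) (Fin K) ℂ) = Ψ (fun _ => 1) := by
    simp only [hΨ_def]
    have h0 : (RCLike.ofReal (K := ℂ) ∘ fun _ : Fin K => (1 : ℝ)) = fun _ => (1 : ℂ) := by
      funext i; simp
    rw [h0, Matrix.diagonal_one, Matrix.mul_one, hU1]
  have hΨ_sub : ∀ d1 d2 : Fin K → ℝ, Ψ d1 - Ψ d2 = Ψ (fun i => d1 i - d2 i) := by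
    intro d1 d2
    simp only [hΨ_def, ← Matrix.sub_mul, ← Matrix.mul_sub, Matrix.diagonal_sub]
    have : (fun i => (RCLike.ofReal ∘ d1) i - (RCLike.ofReal ∘ d2) i)
        = (RCLike.ofReal (K := ℂ) ∘ fun i => d1 i - d2 i) := by
      funext i; simp
    rw [this]
  have hΨ_add : ∀ d1 d2 : Fin K → ℝ, Ψ d1 + Ψ d2 = Ψ (fun i => d1 i + d2 i) := by
    intro d1 d2
    simp only [hΨ_def, ← Matrix.add_mul, ← Matrix.mul_add, Matrix.diagonal_add]
    have : (fun i => (RCLike.ofReal ∘ d1) i + (RCLike.ofReal ∘ d2) i)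
        = (RCLike.ofReal (K := ℂ) ∘ fun i => d1 i + d2 i) := by
      funext i; simp
    rw [this]
  have hGspec : G = Ψ (fun i => t i - 1) := by
    have : G = (1 + G) - 1 := by abel
    rw [this, spec, hone, hΨ_sub]
  set B : Matrix (Fin K) (Fin K) ℂ := (1 + G)⁻¹ with hB_def
  have hdet : IsUnit (1 + G).det := (Matrix.isUnit_iff_isUnit_det _).mp hpd.isUnit
  have hBspec : B = Ψ (fun i => (t i)⁻¹) := by
    rw [hB_def]
    apply Matrix.inv_eq_right_inv
    rw [spec, mulΨ]
    have : (fun i => t i * (t i)⁻¹) = fun _ : Fin K => (1 : ℝ) := by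
      ext i; exact mul_inv_cancel₀ (ht i).ne'
    rw [this, ← hone]
  set w : Fin K → ℝ := fun i => (t i)⁻¹ + t i - 2 with hw_def
  have hw0 : ∀ i, 0 ≤ w i := by
    intro i
    have h1 : w i = (t i - 1) ^ 2 / t i := by
      rw [hw_def]; field_simp [(ht i).ne']; ring
    rw [h1]; exact div_nonneg (sq_nonneg _) (ht i).le
  set P : Matrix (Fin K) (Fin K) ℂ := B + G - 1 with hP_def
  have hPspec : P = Ψ w := by
    rw [hP_def, hBspec, hGspec, hone, hΨ_add, hΨ_sub]
    exact Ψcongr fun i => by rw [hw_def]; ring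
  -- entry formula
  have entry : ∀ (d : Fin K → ℝ) (k l : Fin K),
      Ψ d k l = ∑ i, U k i * (d i : ℂ) * (starRingEnd ℂ) (U l i) := by
    intro d k l
    show (U * Matrix.diagonal (RCLike.ofReal (K := ℂ) ∘ d) * star U) k l
      = ∑ i, U k i * (d i : ℂ) * (starRingEnd ℂ) (U l i)
    rw [Matrix.mul_apply]
    refine Finset.sum_congr rfl fun i _ => ?_
    rw [Matrix.mul_diagonal, Matrix.star_apply, RCLike.star_def]
    simp [Function.comp]
  -- unitary entries bounded by 1
  have hUbound : ∀ k i : Fin K, Complex.abs (U k i) ≤ 1 := by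
    intro k i
    have h : (star U * U) i i = (1 : Matrix (Fin K) (Fin K) ℂ) i i := by rw [hU2]
    simp only [Matrix.mul_apply, Matrix.star_apply, Matrix.one_apply_eq] at h
    have h' : ∑ j, (Complex.normSq (U j i) : ℂ) = 1 := by
      rw [← h]
      refine Finset.sum_congr rfl fun j _ => ?_
      rw [RCLike.star_def, mul_comm, Complex.mul_conj]
    have h'' : ∑ j, Complex.normSq (U j i) = 1 := by exact_mod_cast h'
    have hle : Complex.normSq (U k i) ≤ 1 := by
      rw [← h'']
      exact Finset.single_le_sum (f := fun j => Complex.normSq (U j i))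
        (fun j _ => Complex.normSq_nonneg _) (Finset.mem_univ k)
    rw [Complex.abs_coe', Complex.norm_def]
    exact Real.sqrt_le_one.mpr hle
  have hPentry : ∀ k l : Fin K, Complex.abs (P k l) ≤ ∑ i, w i := by
    intro k l
    rw [hPspec, entry]
    calc Complex.abs (∑ i, U k i * (w i : ℂ) * (starRingEnd ℂ) (U l i))
        ≤ ∑ i, Complex.abs (U k i * (w i : ℂ) * (starRingEnd ℂ) (U l i)) :=
          Complex.abs.sum_le _ _
      _ ≤ ∑ i, w i := by
          refine Finset.sum_le_sum fun i _ => ?_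
          rw [_root_.map_mul, _root_.map_mul, Complex.abs_ofReal, Complex.abs_conj,
            abs_of_nonneg (hw0 i)]
          have h1 := hUbound k i
          have h2 := hUbound l i
          have h3 := hw0 i
          have h4 : (0:ℝ) ≤ Complex.abs (U k i) := Complex.abs.nonneg _
          have h5 : (0:ℝ) ≤ Complex.abs (U l i) := Complex.abs.nonneg _
          calc Complex.abs (U k i) * w i * Complex.abs (U l i)
              ≤ 1 * w i * 1 := by gcongr <;> assumption
            _ = w i := by ring
  -- trace of Ψ
  have trΨ : ∀ d : Fin K → ℝ, Matrix.trace (Ψ d) = ∑ i, (d i : ℂ) := by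
    intro d
    show Matrix.trace (U * Matrix.diagonal (RCLike.ofReal (K := ℂ) ∘ d) * star U) = _
    rw [Matrix.trace_mul_cycle, hU2, Matrix.one_mul, Matrix.trace_diagonal]
    simp [Function.comp]
  have htrP : Matrix.trace P = ((∑ i, w i : ℝ) : ℂ) := by
    rw [hPspec, trΨ]; push_cast; rfl
  have hmulinv : (1 + G) * B = 1 := Matrix.mul_nonsing_inv _ hdet
  have hGB : G * B = 1 - B := by
    rw [Matrix.add_mul, Matrix.one_mul] at hmulinv
    exact eq_sub_of_add_eq' hmulinv
  have htr1 : Matrix.trace (G * B) = (K : ℂ) - Matrix.trace B := by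
    rw [hGB, Matrix.trace_sub, Matrix.trace_one]
    simp
  have htr2 : Matrix.trace (G * B) = Matrix.trace G - Matrix.trace (G * E) := by
    rw [← trace_mul_bandPart hband B, hbe, Matrix.mul_sub, Matrix.trace_sub, Matrix.mul_one,
      trace_mul_bandPart hband E]
  have htrPBG : Matrix.trace P = Matrix.trace B + Matrix.trace G - (K : ℂ) := by
    rw [hP_def, Matrix.trace_sub, Matrix.trace_add, Matrix.trace_one]
    simp
  have htrGE : Matrix.trace (G * E) = Matrix.trace P := by
    rw [htrPBG]; linear_combination htr2 - htr1
  -- Frobenius quantities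
  set x2 : ℝ := ∑ k, ∑ l, Complex.abs (G k l) ^ 2 with hx2_def
  have hx2_nonneg : 0 ≤ x2 :=
    Finset.sum_nonneg fun k _ => Finset.sum_nonneg fun l _ => sq_nonneg _
  set x : ℝ := Real.sqrt x2 with hx_def
  have hx_nonneg : 0 ≤ x := Real.sqrt_nonneg _
  -- trace (G*E) as a double sum, Cauchy–Schwarz
  have hTr : Matrix.trace (G * E) = ∑ p : Fin K × Fin K, G p.1 p.2 * E p.2 p.1 := by
    have h1 : ∑ p : Fin K × Fin K, G p.1 p.2 * E p.2 p.1 = ∑ k, ∑ l, G k l * E l k := by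
      rw [← Finset.univ_product_univ, Finset.sum_product]
    rw [h1, Matrix.trace]
    simp only [Matrix.diag, Matrix.mul_apply]
  set S : ℝ := ∑ p : Fin K × Fin K, Complex.abs (G p.1 p.2) * Complex.abs (E p.2 p.1) with hS_def
  have hS0 : 0 ≤ S :=
    Finset.sum_nonneg fun p _ => mul_nonneg (Complex.abs.nonneg _) (Complex.abs.nonneg _)
  have hCS2 : S ^ 2 ≤ x2 * ε ^ 2 := by
    have h1 := Finset.sum_mul_sq_le_sq_mul_sq Finset.univ
      (fun p : Fin K × Fin K => Complex.abs (G p.1 p.2))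
      (fun p : Fin K × Fin K => Complex.abs (E p.2 p.1))
    have h2 : ∑ p : Fin K × Fin K, Complex.abs (G p.1 p.2) ^ 2 = x2 := by
      rw [hx2_def, ← Finset.univ_product_univ, Finset.sum_product]
    have h3 : ∑ p : Fin K × Fin K, Complex.abs (E p.2 p.1) ^ 2 ≤ ε ^ 2 := by
      have h4 : ∑ p : Fin K × Fin K, Complex.abs (E p.2 p.1) ^ 2
          = ∑ k, ∑ l, Complex.abs (E l k) ^ 2 := by
        rw [← Finset.univ_product_univ, Finset.sum_product]
      rw [h4, Finset.sum_comm]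
      exact hEsum
    calc S ^ 2 ≤ (∑ p : Fin K × Fin K, Complex.abs (G p.1 p.2) ^ 2)
          * ∑ p : Fin K × Fin K, Complex.abs (E p.2 p.1) ^ 2 := h1
      _ ≤ x2 * ε ^ 2 := by rw [h2]; exact mul_le_mul_of_nonneg_left h3 hx2_nonneg
  have habs : Complex.abs (Matrix.trace (G * E)) ≤ x * ε := by
    calc Complex.abs (Matrix.trace (G * E)) ≤ S := by
          rw [hTr, hS_def]
          refine (Complex.abs.sum_le _ _).trans_eq ?_
          exact Finset.sum_congr rfl fun p _ => map_mul _ _ _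
      _ = Real.sqrt (S ^ 2) := (Real.sqrt_sq hS0).symm
      _ ≤ Real.sqrt (x2 * ε ^ 2) := Real.sqrt_le_sqrt hCS2
      _ = x * ε := by rw [Real.sqrt_mul hx2_nonneg, Real.sqrt_sq hε0]
  -- x2 equals the sum of squared eigenvalue deviations
  have hGG : G * G = Ψ (fun i => (t i - 1) * (t i - 1)) := by rw [hGspec, mulΨ]
  have htrGG : Matrix.trace (G * G) = ((∑ i, (t i - 1) ^ 2 : ℝ) : ℂ) := by
    rw [hGG, trΨ]
    push_cast
    exact Finset.sum_congr rfl fun i _ => by ring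
  have htrGG2 : Matrix.trace (G * G) = (x2 : ℂ) := by
    rw [Matrix.trace]
    simp only [Matrix.diag, Matrix.mul_apply]
    have h5 : ∀ k l : Fin K, G k l * G l k = ((Complex.abs (G k l) ^ 2 : ℝ) : ℂ) := by
      intro k l
      have h6 : G l k = star (G k l) := by
        conv_lhs => rw [← hGH]
        rw [Matrix.conjTranspose_apply]
      rw [h6, RCLike.star_def, Complex.mul_conj, Complex.abs_coe', Complex.sq_norm]
    rw [hx2_def]
    push_cast
    exact Finset.sum_congr rfl fun k _ => Finset.sum_congr rfl fun l _ => by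
      rw [h5 k l]; push_cast; ring
  have hx2eig : x2 = ∑ i, (t i - 1) ^ 2 := by
    have := htrGG2.symm.trans htrGG
    exact_mod_cast this
  -- scalar chain
  set Sw : ℝ := ∑ i, w i with hSw_def
  have hSw0 : 0 ≤ Sw := Finset.sum_nonneg fun i _ => hw0 i
  have hSwle : Sw ≤ x * ε := by
    have h1 : Complex.abs (Matrix.trace (G * E)) = Sw := by
      rw [htrGE, htrP, Complex.abs_ofReal, abs_of_nonneg hSw0]
    rw [← h1]
    exact habs
  have hti : ∀ i, t i ≤ 1 + x := by
    intro i
    have h1 : (t i - 1) ^ 2 ≤ ∑ j, (t j - 1) ^ 2 :=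
      Finset.single_le_sum (f := fun j => (t j - 1) ^ 2) (fun j _ => sq_nonneg _)
        (Finset.mem_univ i)
    have h2 : t i - 1 ≤ x := by
      have h3 : Real.sqrt ((t i - 1) ^ 2) ≤ Real.sqrt (∑ j, (t j - 1) ^ 2) :=
        Real.sqrt_le_sqrt h1
      rw [Real.sqrt_sq_eq_abs] at h3
      have h4 : Real.sqrt (∑ j, (t j - 1) ^ 2) = x := by rw [hx_def, hx2eig]
      calc t i - 1 ≤ |t i - 1| := le_abs_self _
        _ ≤ x := h4 ▸ h3
    linarith
  have hx2le : x2 ≤ (1 + x) * Sw := by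
    rw [hx2eig, hSw_def, Finset.mul_sum]
    refine Finset.sum_le_sum fun i _ => ?_
    have hwt : w i * t i = (t i - 1) ^ 2 := by
      rw [hw_def]
      have hne := (ht i).ne'
      field_simp
      ring
    have h3 : 0 ≤ w i * (1 + x - t i) := mul_nonneg (hw0 i) (by linarith [hti i])
    nlinarith [hwt, h3]
  have hxle : x ≤ 2 * ε := by
    have hxx : x * x = x2 := Real.mul_self_sqrt hx2_nonneg
    have h4 : x * x ≤ (1 + x) * (x * ε) := by
      calc x * x = x2 := hxx
        _ ≤ (1 + x) * Sw := hx2le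
        _ ≤ (1 + x) * (x * ε) := mul_le_mul_of_nonneg_left hSwle (by linarith)
    rcases eq_or_lt_of_le hx_nonneg with h0 | h0
    · linarith
    · nlinarith [h4, h0, hε0, hε2, mul_pos h0 h0]
  -- conclusion
  have heq : G - bandPart ν E = bandPart ν P := by
    have h1 : bandPart ν P = bandPart ν (B + G) - bandPart ν 1 := by
      rw [hP_def, bandPart_sub]
    rw [h1, bandPart_add, hbe, bandPart_one, bandPart_eq_self hband]
    abel
  intro k l
  rw [heq]
  calc Complex.abs (bandPart ν P k l) ≤ Complex.abs (P k l) := abs_bandPart_le P k l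
    _ ≤ Sw := hPentry k l
    _ ≤ x * ε := hSwle
    _ ≤ (2 * ε) * ε := mul_le_mul_of_nonneg_right hxle hε0
    _ = 2 * ε ^ 2 := by ring


lemma tendsto_matrix_inv {K : ℕ} {α : Type*} {l : Filter α} {f : α → Matrix (Fin K) (Fin K) ℂ}
    {A : Matrix (Fin K) (Fin K) ℂ} (hA : IsUnit A) (h : Tendsto f l (𝓝 A)) :
    Tendsto (fun t => (f t)⁻¹) l (𝓝 A⁻¹) := by
  have hdet : A.det ≠ 0 := ((Matrix.isUnit_iff_isUnit_det A).mp hA).ne_zero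
  have hc : ContinuousAt Ring.inverse A.det := by
    rw [Ring.inverse_eq_inv']
    exact continuousAt_inv₀ hdet
  exact ((continuousAt_matrix_inv A hc).tendsto).comp h

lemma posDef_smul_one_add {n : ℕ} {P : Matrix (Fin n) (Fin n) ℂ} (hP : P.PosSemidef)
    {c : ℝ} (hc : 0 < c) : ((c : ℂ) • 1 + P).PosDef := by
  have h1 : ((c : ℂ) • (1 : Matrix (Fin n) (Fin n) ℂ)).PosDef := by
    rw [Matrix.smul_one_eq_diagonal]
    exact Matrix.posDef_diagonal_iff.mpr fun i => by exact_mod_cast hc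
  exact h1.add_posSemidef hP

lemma key_identity {N K : ℕ} (H : Matrix (Fin N) (Fin K) ℂ) {c : ℝ} (hc : 0 < c) :
    Hᴴ * ((c : ℂ) • 1 + H * Hᴴ)⁻¹ * H - 1
      = -((c : ℂ) • ((c : ℂ) • 1 + Hᴴ * H)⁻¹) := by
  set SN : Matrix (Fin N) (Fin N) ℂ := (c : ℂ) • 1 + H * Hᴴ with hSN
  set SK : Matrix (Fin K) (Fin K) ℂ := (c : ℂ) • 1 + Hᴴ * H with hSK
  have hSNu : IsUnit SN := (posDef_smul_one_add (Matrix.posSemidef_self_mul_conjTranspose H) hc).isUnit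
  have hSKu : IsUnit SK := (posDef_smul_one_add (Matrix.posSemidef_conjTranspose_mul_self H) hc).isUnit
  have hSNdet := (Matrix.isUnit_iff_isUnit_det SN).mp hSNu
  have hSKdet := (Matrix.isUnit_iff_isUnit_det SK).mp hSKu
  have hcomm : H * SK = SN * H := by
    rw [hSN, hSK, Matrix.mul_add, Matrix.add_mul, Matrix.mul_smul, Matrix.smul_mul,
      Matrix.mul_one, Matrix.one_mul, Matrix.mul_assoc]
  have hpush : SN⁻¹ * H = H * SK⁻¹ := by
    have h1 : SN⁻¹ * (H * SK) * SK⁻¹ = SN⁻¹ * (SN * H) * SK⁻¹ := by rw [hcomm]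
    calc SN⁻¹ * H = SN⁻¹ * H * (SK * SK⁻¹) := by rw [Matrix.mul_nonsing_inv _ hSKdet, Matrix.mul_one]
    _ = SN⁻¹ * (H * SK) * SK⁻¹ := by simp only [Matrix.mul_assoc]
    _ = SN⁻¹ * (SN * H) * SK⁻¹ := h1
    _ = (SN⁻¹ * SN) * H * SK⁻¹ := by simp only [Matrix.mul_assoc]
    _ = H * SK⁻¹ := by rw [Matrix.nonsing_inv_mul _ hSNdet, Matrix.one_mul]
  have hmain : Hᴴ * SN⁻¹ * H = 1 - (c : ℂ) • SK⁻¹ := by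
    have h2 : Hᴴ * SN⁻¹ * H = (Hᴴ * H) * SK⁻¹ := by
      rw [Matrix.mul_assoc, hpush, ← Matrix.mul_assoc]
    have h3 : Hᴴ * H = SK - (c : ℂ) • 1 := by rw [hSK, add_sub_cancel_left]
    rw [h2, h3, Matrix.sub_mul, Matrix.mul_nonsing_inv _ hSKdet, Matrix.smul_mul, Matrix.one_mul]
  rw [hmain]
  abel

lemma bandPart_neg {K ν : ℕ} (A : Matrix (Fin K) (Fin K) ℂ) :
    bandPart ν (-A) = -bandPart ν A := by
  ext k l; simp only [bandPart_apply, Matrix.neg_apply]; split <;> simp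

lemma bandPart_smul {K ν : ℕ} (c : ℂ) (A : Matrix (Fin K) (Fin K) ℂ) :
    bandPart ν (c • A) = c • bandPart ν A := by
  ext k l; simp only [bandPart_apply, Matrix.smul_apply]; split <;> simp

lemma bandPart_bandPart {K ν : ℕ} (A : Matrix (Fin K) (Fin K) ℂ) :
    bandPart ν (bandPart ν A) = bandPart ν A := by
  ext k l; simp only [bandPart_apply]; split <;> simp_all

lemma continuous_bandPart {K ν : ℕ} : Continuous (bandPart (K := K) ν) := by
  refine continuous_pi fun k => continuous_pi fun l => ?_
  simp only [bandPart_apply]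
  split
  · exact (continuous_apply l).comp (continuous_apply k)
  · exact continuous_const

lemma tendsto_bandPart {K ν : ℕ} {α : Type*} {l : Filter α} {f : α → Matrix (Fin K) (Fin K) ℂ}
    {L : Matrix (Fin K) (Fin K) ℂ} (h : Tendsto f l (𝓝 L)) :
    Tendsto (fun t => bandPart ν (f t)) l (𝓝 (bandPart ν L)) :=
  (continuous_bandPart.tendsto L).comp h

end BandAux

/-- Lemma 3 of the paper. SNR asymptotics of the optimal banded trellis
representation matrix `G(N₀)` satisfying `[(I+G(N₀))⁻¹]_ν = −[M(N₀)]_ν` with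
`M(N₀) = Hᴴ(N₀I+HHᴴ)⁻¹H − I`: as `N₀ → 0⁺`, `[(N₀(I+G(N₀)))⁻¹]_ν → [(HᴴH)⁻¹]_ν`, and as
`N₀ → ∞`, `[N₀ G(N₀)]_ν → [HᴴH]_ν`. -/
theorem optimal_G_snr_asymptotics {N K : ℕ} (hK : 1 ≤ K)
    (H : Matrix (Fin N) (Fin K) ℂ) (hinv : IsUnit (Hᴴ * H)) (ν : ℕ)
    (G : ℝ → Matrix (Fin K) (Fin K) ℂ)
    (hG : ∀ N₀ : ℝ, 0 < N₀ →
      (G N₀).IsHermitian ∧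
      (∀ k ℓ : Fin K, |((k : ℕ) : ℤ) - ((ℓ : ℕ) : ℤ)| > (ν : ℤ) → G N₀ k ℓ = 0) ∧
      (1 + G N₀).PosDef ∧
      bandPart ν (1 + G N₀)⁻¹
        = -(bandPart ν (Hᴴ * ((N₀ : ℂ) • 1 + H * Hᴴ)⁻¹ * H - 1))) :
    Tendsto (fun N₀ : ℝ => bandPart ν (((N₀ : ℂ) • (1 + G N₀))⁻¹))
        (𝓝[>] (0 : ℝ)) (𝓝 (bandPart ν (Hᴴ * H)⁻¹)) ∧
      Tendsto (fun N₀ : ℝ => bandPart ν ((N₀ : ℂ) • G N₀))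
        atTop (𝓝 (bandPart ν (Hᴴ * H))) := by
  classical
  set A : Matrix (Fin K) (Fin K) ℂ := Hᴴ * H with hA_def
  have hApsd : A.PosSemidef := Matrix.posSemidef_conjTranspose_mul_self H
  have hSKpd : ∀ N₀ : ℝ, 0 < N₀ → (((N₀ : ℂ) • 1 + A) : Matrix (Fin K) (Fin K) ℂ).PosDef :=
    fun N₀ h => BandAux.posDef_smul_one_add hApsd h
  have hband_eq : ∀ N₀ : ℝ, 0 < N₀ → bandPart ν (1 + G N₀)⁻¹
      = bandPart ν ((N₀ : ℂ) • (((N₀ : ℂ) • 1 + A)⁻¹)) := by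
    intro N₀ h
    rw [(hG N₀ h).2.2.2, BandAux.key_identity H h, BandAux.bandPart_neg, neg_neg]
  -- Part (i)
  have part1 : Tendsto (fun N₀ : ℝ => bandPart ν (((N₀ : ℂ) • (1 + G N₀))⁻¹))
      (𝓝[>] (0 : ℝ)) (𝓝 (bandPart ν A⁻¹)) := by
    have hlim : Tendsto (fun N₀ : ℝ => bandPart ν ((((N₀ : ℂ) • 1 + A))⁻¹))
        (𝓝[>] (0 : ℝ)) (𝓝 (bandPart ν A⁻¹)) := by
      apply BandAux.tendsto_bandPart
      apply BandAux.tendsto_matrix_inv hinv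
      have hc : Continuous (fun N₀ : ℝ => (N₀ : ℂ) • (1 : Matrix (Fin K) (Fin K) ℂ) + A) :=
        (Complex.continuous_ofReal.smul continuous_const).add continuous_const
      have h0 := hc.tendsto 0
      have : ((0 : ℝ) : ℂ) • (1 : Matrix (Fin K) (Fin K) ℂ) + A = A := by simp
      rw [this] at h0
      exact h0.mono_left nhdsWithin_le_nhds
    refine hlim.congr' ?_
    filter_upwards [self_mem_nhdsWithin] with N₀ hN₀
    have hN₀' : 0 < N₀ := hN₀
    have hpd1 : (1 + G N₀).PosDef := (hG N₀ hN₀').2.2.1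
    have hdet1 : IsUnit (1 + G N₀).det := (Matrix.isUnit_iff_isUnit_det _).mp hpd1.isUnit
    have hNne : (N₀ : ℂ) ≠ 0 := by exact_mod_cast hN₀'.ne'
    have hinv_smul : ((N₀ : ℂ) • (1 + G N₀))⁻¹ = (N₀ : ℂ)⁻¹ • (1 + G N₀)⁻¹ := by
      apply Matrix.inv_eq_right_inv
      rw [Matrix.smul_mul, Matrix.mul_smul, Matrix.mul_nonsing_inv _ hdet1, smul_smul,
        mul_inv_cancel₀ hNne, one_smul]
    calc bandPart ν ((((N₀ : ℂ) • 1 + A))⁻¹)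
        = (N₀ : ℂ)⁻¹ • ((N₀ : ℂ) • bandPart ν ((((N₀ : ℂ) • 1 + A))⁻¹)) := by
          rw [smul_smul, inv_mul_cancel₀ hNne, one_smul]
      _ = (N₀ : ℂ)⁻¹ • bandPart ν ((N₀ : ℂ) • (((N₀ : ℂ) • 1 + A)⁻¹)) := by
          rw [BandAux.bandPart_smul]
      _ = (N₀ : ℂ)⁻¹ • bandPart ν ((1 + G N₀)⁻¹) := by rw [← hband_eq N₀ hN₀']
      _ = bandPart ν ((N₀ : ℂ)⁻¹ • (1 + G N₀)⁻¹) := by rw [BandAux.bandPart_smul]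
      _ = bandPart ν (((N₀ : ℂ) • (1 + G N₀))⁻¹) := by rw [hinv_smul]
  -- Part (ii)
  set E : ℝ → Matrix (Fin K) (Fin K) ℂ :=
    fun N₀ => 1 - (N₀ : ℂ) • (((N₀ : ℂ) • 1 + A)⁻¹) with hE_def
  have hsmulinv : ∀ N₀ : ℝ, 0 < N₀ →
      (N₀ : ℂ) • (((N₀ : ℂ) • 1 + A)⁻¹)
        = ((1 : Matrix (Fin K) (Fin K) ℂ) + ((N₀⁻¹ : ℝ) : ℂ) • A)⁻¹ := by
    intro N₀ h
    have hNne : (N₀ : ℂ) ≠ 0 := by exact_mod_cast h.ne'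
    have hdet := (Matrix.isUnit_iff_isUnit_det _).mp (hSKpd N₀ h).isUnit
    have h1 : (1 : Matrix (Fin K) (Fin K) ℂ) + ((N₀⁻¹ : ℝ) : ℂ) • A
        = ((N₀⁻¹ : ℝ) : ℂ) • ((N₀ : ℂ) • 1 + A) := by
      rw [smul_add, smul_smul]
      push_cast
      rw [inv_mul_cancel₀ hNne, one_smul]
    rw [h1]
    symm
    apply Matrix.inv_eq_right_inv
    rw [Matrix.smul_mul, Matrix.mul_smul, Matrix.mul_nonsing_inv _ hdet, smul_smul]
    push_cast
    rw [inv_mul_cancel₀ hNne, one_smul]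
  have hEA : ∀ N₀ : ℝ, 0 < N₀ → E N₀ = A * (((N₀ : ℂ) • 1 + A)⁻¹) := by
    intro N₀ h
    have hdet := (Matrix.isUnit_iff_isUnit_det _).mp (hSKpd N₀ h).isUnit
    have h2 : A * (((N₀ : ℂ) • 1 + A)⁻¹)
        = (((N₀ : ℂ) • 1 + A) - (N₀ : ℂ) • 1) * (((N₀ : ℂ) • 1 + A)⁻¹) := by
      rw [add_sub_cancel_left]
    rw [hE_def, h2, Matrix.sub_mul, Matrix.mul_nonsing_inv _ hdet, Matrix.smul_mul,
      Matrix.one_mul]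
  have hNE : Tendsto (fun N₀ : ℝ => (N₀ : ℂ) • E N₀) atTop (𝓝 A) := by
    have hinner : Tendsto (fun N₀ : ℝ => (1 : Matrix (Fin K) (Fin K) ℂ) + ((N₀⁻¹ : ℝ) : ℂ) • A)
        atTop (𝓝 (1 : Matrix (Fin K) (Fin K) ℂ)) := by
      have hc : Continuous (fun c : ℝ => (1 : Matrix (Fin K) (Fin K) ℂ) + (c : ℂ) • A) :=
        continuous_const.add (Complex.continuous_ofReal.smul continuous_const)
      have h0 := hc.tendsto 0
      have heq : (1 : Matrix (Fin K) (Fin K) ℂ) + ((0 : ℝ) : ℂ) • A = 1 := by simp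
      rw [heq] at h0
      exact h0.comp tendsto_inv_atTop_zero
    have hinv1 : Tendsto (fun N₀ : ℝ => ((1 : Matrix (Fin K) (Fin K) ℂ) + ((N₀⁻¹ : ℝ) : ℂ) • A)⁻¹)
        atTop (𝓝 (1 : Matrix (Fin K) (Fin K) ℂ)⁻¹) :=
      BandAux.tendsto_matrix_inv isUnit_one hinner
    have hone_inv : (1 : Matrix (Fin K) (Fin K) ℂ)⁻¹ = 1 :=
      Matrix.inv_eq_left_inv (by rw [Matrix.one_mul])
    rw [hone_inv] at hinv1
    have hmul : Continuous (fun M : Matrix (Fin K) (Fin K) ℂ => A * M) :=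
      continuous_const.matrix_mul continuous_id
    have h2 := (hmul.tendsto 1).comp hinv1
    have h3 : A * (1 : Matrix (Fin K) (Fin K) ℂ) = A := Matrix.mul_one A
    rw [h3] at h2
    refine h2.congr' ?_
    filter_upwards [eventually_gt_atTop (0 : ℝ)] with N₀ hN₀
    rw [hEA N₀ hN₀, ← Matrix.mul_smul, hsmulinv N₀ hN₀]
    simp [Function.comp]
  -- entrywise square-sum bound
  set a : ℝ := ∑ k : Fin K, ∑ l : Fin K, Complex.abs (A k l) ^ 2 with ha_def
  have ha0 : 0 ≤ a := Finset.sum_nonneg fun k _ => Finset.sum_nonneg fun l _ => sq_nonneg _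
  have hcontSq : Continuous (fun M : Matrix (Fin K) (Fin K) ℂ =>
      ∑ k : Fin K, ∑ l : Fin K, Complex.abs (M k l) ^ 2) := by
    refine continuous_finset_sum _ fun k _ => continuous_finset_sum _ fun l _ => ?_
    exact (Complex.continuous_abs.comp ((continuous_apply l).comp (continuous_apply k))).pow 2
  have hSqT : Tendsto (fun N₀ : ℝ => ∑ k : Fin K, ∑ l : Fin K,
      Complex.abs (((N₀ : ℂ) • E N₀) k l) ^ 2) atTop (𝓝 a) := (hcontSq.tendsto A).comp hNE
  have hboundEv : ∀ᶠ N₀ : ℝ in atTop, ∑ k : Fin K, ∑ l : Fin K,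
      Complex.abs (((N₀ : ℂ) • E N₀) k l) ^ 2 ≤ a + 1 :=
    hSqT.eventually_le_const (lt_add_one a)
  set εf : ℝ → ℝ := fun N₀ => Real.sqrt (a + 1) / N₀ with hεf_def
  have hεfT : Tendsto εf atTop (𝓝 0) := by
    have := tendsto_inv_atTop_zero.const_mul (Real.sqrt (a + 1))
    rw [mul_zero] at this
    refine this.congr fun N₀ => ?_
    simp only [hεf_def]
    rw [div_eq_mul_inv]
  have hεEv : ∀ᶠ N₀ : ℝ in atTop, εf N₀ ≤ 1 / 2 :=
    hεfT.eventually_le_const (by norm_num)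
  -- the core estimate, eventually
  have hcoreEv : ∀ᶠ N₀ : ℝ in atTop, ∀ k l : Fin K,
      Complex.abs ((G N₀ - bandPart ν (E N₀)) k l) ≤ 2 * (a + 1) / N₀ ^ 2 := by
    filter_upwards [eventually_gt_atTop (0 : ℝ), hboundEv, hεEv] with N₀ hN₀ hbound hε
    have hεf0 : 0 ≤ εf N₀ := div_nonneg (Real.sqrt_nonneg _) hN₀.le
    have hbe : bandPart ν (1 + G N₀)⁻¹ = 1 - bandPart ν (E N₀) := by
      rw [hband_eq N₀ hN₀, hE_def]
      rw [BandAux.bandPart_sub, BandAux.bandPart_one]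
      abel
    have hEsum : ∑ k : Fin K, ∑ l : Fin K, Complex.abs (E N₀ k l) ^ 2 ≤ (εf N₀) ^ 2 := by
      have hsq : (εf N₀) ^ 2 = (a + 1) / N₀ ^ 2 := by
        rw [hεf_def, div_pow, Real.sq_sqrt (by linarith)]
      rw [hsq]
      have hterm : ∀ k l : Fin K, Complex.abs (E N₀ k l) ^ 2
          = Complex.abs (((N₀ : ℂ) • E N₀) k l) ^ 2 / N₀ ^ 2 := by
        intro k l
        rw [Matrix.smul_apply, smul_eq_mul, _root_.map_mul, Complex.abs_ofReal,
          abs_of_pos hN₀, mul_pow]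
        field_simp
      calc ∑ k : Fin K, ∑ l : Fin K, Complex.abs (E N₀ k l) ^ 2
          = (∑ k : Fin K, ∑ l : Fin K, Complex.abs (((N₀ : ℂ) • E N₀) k l) ^ 2) / N₀ ^ 2 := by
            rw [Finset.sum_div]
            refine Finset.sum_congr rfl fun k _ => ?_
            rw [Finset.sum_div]
            exact Finset.sum_congr rfl fun l _ => hterm k l
        _ ≤ (a + 1) / N₀ ^ 2 := by
            apply div_le_div_of_nonneg_right hbound ?_ |>.trans_eq rfl
            positivity
    have hcore := BandAux.core (hG N₀ hN₀).1 (hG N₀ hN₀).2.1 (hG N₀ hN₀).2.2.1 hbe hεf0 hε hEsum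
    intro k l
    have h2 : 2 * (εf N₀) ^ 2 = 2 * (a + 1) / N₀ ^ 2 := by
      rw [hεf_def, div_pow, Real.sq_sqrt (by linarith)]
      ring
    rw [← h2]
    exact hcore k l
  -- second term tends to 0
  have hsecond : Tendsto (fun N₀ : ℝ => (N₀ : ℂ) • bandPart ν (G N₀ - bandPart ν (E N₀)))
      atTop (𝓝 (0 : Matrix (Fin K) (Fin K) ℂ)) := by
    refine tendsto_pi_nhds.mpr ?_
    intro k
    rw [tendsto_pi_nhds]
    intro l
    have hzero : (0 : Matrix (Fin K) (Fin K) ℂ) k l = 0 := rfl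
    rw [hzero]
    refine squeeze_zero_norm' (a := fun N₀ : ℝ => 2 * (a + 1) / N₀) ?_ ?_
    · filter_upwards [eventually_gt_atTop (0 : ℝ), hcoreEv] with N₀ hN₀ hcore
      have h1 : ‖((N₀ : ℂ) • bandPart ν (G N₀ - bandPart ν (E N₀))) k l‖
          = N₀ * Complex.abs (bandPart ν (G N₀ - bandPart ν (E N₀)) k l) := by
        rw [Matrix.smul_apply, smul_eq_mul, Complex.norm_eq_abs, _root_.map_mul,
          Complex.abs_ofReal, abs_of_pos hN₀]
      rw [h1]
      calc N₀ * Complex.abs (bandPart ν (G N₀ - bandPart ν (E N₀)) k l)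
          ≤ N₀ * (2 * (a + 1) / N₀ ^ 2) := by
            refine mul_le_mul_of_nonneg_left ?_ hN₀.le
            exact (BandAux.abs_bandPart_le _ k l).trans (hcore k l)
        _ = 2 * (a + 1) / N₀ := by field_simp
    · have := tendsto_inv_atTop_zero.const_mul (2 * (a + 1))
      rw [mul_zero] at this
      refine this.congr fun N₀ => ?_
      rw [div_eq_mul_inv]
  -- assemble part (ii)
  have part2 : Tendsto (fun N₀ : ℝ => bandPart ν ((N₀ : ℂ) • G N₀)) atTop
      (𝓝 (bandPart ν A)) := by
    have hsum := (BandAux.tendsto_bandPart (ν := ν) hNE).add hsecond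
    rw [add_zero] at hsum
    refine hsum.congr' ?_
    filter_upwards [eventually_gt_atTop (0 : ℝ)] with N₀ hN₀
    have hGband : bandPart ν (G N₀) = G N₀ := BandAux.bandPart_eq_self (hG N₀ hN₀).2.1
    have e1 : bandPart ν ((N₀ : ℂ) • E N₀) = (N₀ : ℂ) • bandPart ν (E N₀) :=
      BandAux.bandPart_smul _ _
    have e2 : bandPart ν (G N₀ - bandPart ν (E N₀)) = G N₀ - bandPart ν (E N₀) := by
      rw [BandAux.bandPart_sub, hGband, BandAux.bandPart_bandPart]
    have e3 : bandPart ν ((N₀ : ℂ) • G N₀) = (N₀ : ℂ) • G N₀ := by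
      rw [BandAux.bandPart_smul, hGband]
    rw [e1, e2, e3, ← smul_add]
    congr 1
    abel
  exact ⟨part1, part2⟩
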